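/- Let G be a group acting on ℝ by orientation-preserving homeomorphisms, let Γ = {f ∈ G : Fix(f) ≠ ∅}, and suppose Γ is a normal subgroup of G with Fix(Γ) ≠ ∅ and Γ ≠ G. Consider the quotient action: collapsing the closure of each connected component of ℝ \ Fix(Γ) to a point yields a monotone quotient map φ. Then the induced action of G/Γ on the quotient space is free. -/

import Mathlib

open Set MeasureTheory
open scoped NNReal

/-- Orientation-preserving homeomorphisms of ℝ, modelled as order-isomorphisms of ℝ
(every order-isomorphism of ℝ is a strictly increasing homeomorphism and conversely). -/
abbrev HomeoR := ℝ ≃o ℝ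

/-- The fixed point set of `f`. -/
def FixSet (f : HomeoR) : Set ℝ := {x : ℝ | f x = x}

/-- `f` and `g` are crossed with `f` in the distinguished role: there is an interval
`(a,b)` with endpoints possibly `±∞` such that `Fix(f) ∩ [a,b] = {a,b}` while `g`
maps `a` or `b` into `(a,b)`. -/
def CrossedAt (f g : HomeoR) : Prop :=
  ∃ a b : EReal, a < b ∧
    ({x : ℝ | a ≤ (x : EReal) ∧ (x : EReal) ≤ b} ∩ FixSet f
      = {x : ℝ | (x : EReal) = a ∨ (x : EReal) = b}) ∧
    (∃ x : ℝ, ((x : EReal) = a ∨ (x : EReal) = b) ∧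
      a < (g x : EReal) ∧ (g x : EReal) < b)

/-- Two elements are crossed. -/
def Crossed (f g : HomeoR) : Prop := CrossedAt f g ∨ CrossedAt g f

/-- `μ` is a (nonzero) `G`-invariant Radon measure on ℝ. -/
def InvariantRadon (G : Subgroup HomeoR) (μ : Measure ℝ) : Prop :=
  μ ≠ 0 ∧ IsFiniteMeasureOnCompacts μ ∧ ∀ g ∈ G, Measure.map (⇑g) μ = μ

/-- `Λ` is a nonempty minimal closed `G`-invariant subset of ℝ. -/
def MinimalSet (G : Subgroup HomeoR) (Λ : Set ℝ) : Prop :=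
  Λ.Nonempty ∧ IsClosed Λ ∧ (∀ g ∈ G, ⇑g '' Λ = Λ) ∧
    ∀ Λ' ⊆ Λ, Λ'.Nonempty → IsClosed Λ' → (∀ g ∈ G, ⇑g '' Λ' = Λ') → Λ' = Λ

/-- A preconnected set in ℝ avoiding a point lies on one side of it. -/
lemma split_lemma (s : Set ℝ) (hs : IsPreconnected s) (y : ℝ) (hy : y ∉ s) :
    s ⊆ Set.Iio y ∨ s ⊆ Set.Ioi y := by
  by_contra h
  obtain ⟨h1, h2⟩ := not_or.mp h
  obtain ⟨u, hu, hu2⟩ := Set.not_subset.mp h1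
  obtain ⟨v, hv, hv2⟩ := Set.not_subset.mp h2
  simp only [Set.mem_Iio, Set.mem_Ioi, not_lt] at hu2 hv2
  exact hy (hs.Icc_subset hv hu ⟨hv2, hu2⟩)

lemma aux_false (G : Subgroup HomeoR) (Γ : Set HomeoR)
    (hnormal : ∀ g ∈ G, ∀ f ∈ Γ, g * f * g⁻¹ ∈ Γ)
    (F : Set ℝ) (hF : F = ⋂ f ∈ Γ, FixSet f) (hFne : F.Nonempty)
    (φ : ℝ → ℝ)
    (hfib : ∀ x y : ℝ, φ x = φ y ↔ (x = y ∨ ∃ z ∈ Fᶜ,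
      x ∈ closure (connectedComponentIn Fᶜ z) ∧
      y ∈ closure (connectedComponentIn Fᶜ z)))
    (g : HomeoR) (hg : g ∈ G) (hglt : ∀ t, t < g t)
    (z : ℝ) (hz : z ∈ Fᶜ) (x : ℝ)
    (hx : x ∈ closure (connectedComponentIn Fᶜ z))
    (hgx : g x ∈ closure (connectedComponentIn Fᶜ z)) : False := by
  -- invariance of F under elements of G
  have hFinvG : ∀ h : HomeoR, h ∈ G → ∀ t ∈ F, h t ∈ F := by
    intro h hh t ht
    rw [hF, Set.mem_iInter₂]
    intro f hf
    have hmem : h⁻¹ * f * h ∈ Γ := by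
      have := hnormal h⁻¹ (inv_mem hh) f hf
      rwa [inv_inv] at this
    rw [hF, Set.mem_iInter₂] at ht
    have ht' : (h⁻¹ * f * h) t = t := ht _ hmem
    have h2 : h⁻¹ (f (h t)) = t := ht'
    have h3 := congrArg h h2
    simpa [FixSet] using h3
  have hFinv : ∀ t ∈ F, g t ∈ F := hFinvG g hg
  have hFinv' : ∀ t ∈ F, g⁻¹ t ∈ F := hFinvG g⁻¹ (inv_mem hg)
  have hFcl : IsClosed F := by
    rw [hF]
    exact isClosed_biInter fun f _ => isClosed_eq f.continuous continuous_id
  have hFo : IsOpen Fᶜ := hFcl.isOpen_compl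
  set C := connectedComponentIn Fᶜ z with hC
  have hCopen : IsOpen C := hFo.connectedComponentIn
  have hCpre : IsPreconnected C := isPreconnected_connectedComponentIn
  have hzC : z ∈ C := mem_connectedComponentIn hz
  have hCsub : C ⊆ Fᶜ := connectedComponentIn_subset _ _
  have hKpre : IsPreconnected (closure C) := hCpre.closure
  -- points of (closure C) ∩ Fᶜ lie in C
  have factA : ∀ y : ℝ, y ∈ closure C → y ∈ Fᶜ → y ∈ C := by
    intro y hyK hyF
    have hDopen : IsOpen (connectedComponentIn Fᶜ y) := hFo.connectedComponentIn
    have hyD : y ∈ connectedComponentIn Fᶜ y := mem_connectedComponentIn hyF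
    obtain ⟨w, hwD, hwC⟩ := _root_.mem_closure_iff.mp hyK _ hDopen hyD
    have h1 : connectedComponentIn Fᶜ y = connectedComponentIn Fᶜ w :=
      connectedComponentIn_eq hwD
    have h2 : C = connectedComponentIn Fᶜ w := connectedComponentIn_eq hwC
    rw [h2, ← h1]
    exact hyD
  -- F is not bounded above
  have hFnb : ¬ BddAbove F := by
    intro hbdd
    have hm : sSup F ∈ F := hFcl.csSup_mem hFne hbdd
    have h1 := hglt (sSup F)
    have h2 : g (sSup F) ≤ sSup F := le_csSup hbdd (hFinv _ hm)
    linarith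
  obtain ⟨p, hpF, hzp⟩ : ∃ p ∈ F, z < p := by
    by_contra h
    push_neg at h
    exact hFnb ⟨z, fun t ht => h t ht⟩
  have hpC : p ∉ C := fun hp => hCsub hp hpF
  have hCp : C ⊆ Set.Iio p := by
    rcases split_lemma C hCpre p hpC with h | h
    · exact h
    · exact absurd (h hzC) (by simp [not_lt, le_of_lt hzp])
  have hKb : BddAbove (closure C) := by
    refine ⟨p, fun t ht => ?_⟩
    have : t ∈ closure (Set.Iio p) := closure_mono hCp ht
    rwa [closure_Iio] at this
  set b := sSup (closure C) with hbdef
  have hbK : b ∈ closure C := isClosed_closure.csSup_mem ⟨x, hx⟩ hKb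
  have hball : ∀ t ∈ closure C, t ≤ b := fun t ht => le_csSup hKb ht
  have hbC : b ∉ C := by
    intro hbC
    rcases Metric.isOpen_iff.mp hCopen b hbC with ⟨ε, hε, hballC⟩
    have hmem : b + ε / 2 ∈ C := by
      apply hballC
      rw [Metric.mem_ball, Real.dist_eq, abs_lt]
      constructor <;> linarith
    have := hball _ (subset_closure hmem)
    linarith
  have hbF : b ∈ F := by
    by_contra hbF
    exact hbC (factA b hbK hbF)
  have hxb : x ≤ b := hball x hx
  have hgxb : g x ≤ b := hball _ hgx
  set a := g⁻¹ b with hadef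
  have hga : g a = b := g.apply_symm_apply b
  have haF : a ∈ F := hFinv' b hbF
  have haltb : a < b := by have := hglt a; rwa [hga] at this
  have hxa : x ≤ a := by
    apply g.le_iff_le.mp
    rw [hga]; exact hgxb
  have haK : a ∈ closure C := hKpre.Icc_subset hx hbK ⟨hxa, le_of_lt haltb⟩
  -- image component
  have hgz : g z ∈ Fᶜ := by
    intro hgzF
    have h2 : g⁻¹ (g z) ∈ F := hFinv' _ hgzF
    exact hz (by simpa using h2)
  set D := connectedComponentIn Fᶜ (g z) with hD
  have himsub : (⇑g) '' C ⊆ Fᶜ := by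
    rintro _ ⟨c, hc, rfl⟩ hgcF
    have h2 : g⁻¹ (g c) ∈ F := hFinv' _ hgcF
    exact hCsub hc (by simpa using h2)
  have hgCD : (⇑g) '' C = D := by
    apply Set.Subset.antisymm
    · exact (hCpre.image _ g.continuous.continuousOn).subset_connectedComponentIn
        ⟨z, hzC, rfl⟩ himsub
    · have hsub' : (⇑g⁻¹) '' D ⊆ Fᶜ := by
        rintro _ ⟨d, hd, rfl⟩ hF'
        have h2 : g (g⁻¹ d) ∈ F := hFinvG g hg _ hF'
        exact (connectedComponentIn_subset _ _ hd) (by simpa using h2)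
      have h2 : (⇑g⁻¹) '' D ⊆ C := by
        apply (isPreconnected_connectedComponentIn.image _
          (g⁻¹ : HomeoR).continuous.continuousOn).subset_connectedComponentIn
          _ hsub'
        exact ⟨g z, mem_connectedComponentIn hgz, g.symm_apply_apply z⟩
      intro d hd
      have : g⁻¹ d ∈ C := h2 ⟨d, hd, rfl⟩
      exact ⟨g⁻¹ d, this, g.apply_symm_apply d⟩
  have himcl : (⇑g) '' closure C = closure D := by
    rw [← hgCD]
    exact g.toHomeomorph.image_closure C
  have hbD : b ∈ closure D := by
    rw [← himcl]; exact ⟨a, haK, hga⟩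
  have hgbD : g b ∈ closure D := by
    rw [← himcl]; exact ⟨b, hbK, rfl⟩
  -- the chain of φ equalities
  have e1 : φ a = φ b := (hfib a b).mpr (Or.inr ⟨z, hz, haK, hbK⟩)
  have e2 : φ b = φ (g b) := (hfib b (g b)).mpr (Or.inr ⟨g z, hgz, hbD, hgbD⟩)
  have e3 : φ a = φ (g b) := e1.trans e2
  rcases (hfib a (g b)).mp e3 with heq | ⟨w, hw, haE, hgbE⟩
  · have := hglt b; rw [← heq] at this; linarith
  · set E := connectedComponentIn Fᶜ w with hE
    have hEpre : IsPreconnected E := isPreconnected_connectedComponentIn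
    have hbE : b ∉ E := fun h => (connectedComponentIn_subset _ _ h) hbF
    rcases split_lemma E hEpre b hbE with h | h
    · have : closure E ⊆ Set.Iic b := by
        rw [← closure_Iio]
        exact closure_mono h
      have := this hgbE
      have := hglt b
      simp only [Set.mem_Iic] at *
      linarith
    · have : closure E ⊆ Set.Ici b := by
        rw [← closure_Ioi]
        exact closure_mono h
      have := this haE
      simp only [Set.mem_Ici] at this
      linarith

theorem quotient_action_free (G : Subgroup HomeoR)
    (Γ : Set HomeoR) (hΓ : Γ = {f : HomeoR | f ∈ G ∧ (FixSet f).Nonempty})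
    (hnormal : ∀ g ∈ G, ∀ f ∈ Γ, g * f * g⁻¹ ∈ Γ)
    (F : Set ℝ) (hF : F = ⋂ f ∈ Γ, FixSet f)
    (hFne : F.Nonempty) (hproper : Γ ≠ {f : HomeoR | f ∈ G})
    (φ : ℝ → ℝ) (hmono : Monotone φ) (hcont : Continuous φ)
    (hsurj : Function.Surjective φ)
    (hfib : ∀ x y : ℝ, φ x = φ y ↔ (x = y ∨ ∃ z ∈ Fᶜ,
      x ∈ closure (connectedComponentIn Fᶜ z) ∧
      y ∈ closure (connectedComponentIn Fᶜ z))) :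
    ∀ g ∈ G, (∃ x : ℝ, φ (g x) = φ x) → (FixSet g).Nonempty := by
  rintro g hgG ⟨x, hx⟩
  rcases (hfib (g x) x).mp hx with h | ⟨z, hz, hgxC, hxC⟩
  · exact ⟨x, h⟩
  · by_contra hnone
    have hne : ∀ t, g t ≠ t := by
      intro t ht
      exact hnone ⟨t, ht⟩
    have hsign : (∀ t, t < g t) ∨ (∀ t, g t < t) := by
      by_contra hmix
      push_neg at hmix
      obtain ⟨⟨s, hs⟩, ⟨t, ht⟩⟩ := hmix
      have hs' : g s < s := lt_of_le_of_ne hs (hne s)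
      have ht' : t < g t := lt_of_le_of_ne ht (fun h => hne t h.symm)
      have hcontf : Continuous fun u => g u - u := g.continuous.sub continuous_id
      have h0 : (0:ℝ) ∈ Set.uIcc (g s - s) (g t - t) := by
        rw [Set.mem_uIcc]
        left
        constructor <;> linarith
      have := intermediate_value_uIcc (a := s) (b := t)
        (f := fun u => g u - u) hcontf.continuousOn h0
      obtain ⟨u, _, hu⟩ := this
      have : g u = u := by dsimp at hu; linarith
      exact hne u this
    rcases hsign with hlt | hgt
    · exact aux_false G Γ hnormal F hF hFne φ hfib g hgG hlt z hz x hxC hgxC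
    · have hlt' : ∀ t, t < g⁻¹ t := by
        intro t
        have h2 := hgt (g⁻¹ t)
        simpa using h2
      have hx2 : g⁻¹ (g x) ∈ closure (connectedComponentIn Fᶜ z) := by
        simpa using hxC
      exact aux_false G Γ hnormal F hF hFne φ hfib g⁻¹ (inv_mem hgG) hlt' z hz (g x) hgxC hx2
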